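/- A loop with companion (γ, 𝔍), where γ takes a nonreal value at its endpoints, is twisted if and only if each shadow has conjugate endpoints: γ_ℐ(a) = conj(γ_ℐ(b)). -/

import Mathlib

open Quaternion Set

/-- The quaternionic exponential, given by the power series `∑ qᵏ/k!`. -/
noncomputable def qexp (q : ℍ[ℝ]) : ℍ[ℝ] := NormedSpace.exp q

/-- The slice argument `arg_ℐ(q) ∈ (0,π)` of a nonreal quaternion. -/
noncomputable def sliceArg (q : ℍ[ℝ]) : ℝ := Real.arccos (q.re / ‖q‖)

/-- The imaginary unit `ℐ(q)` of a nonreal quaternion. -/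
noncomputable def unitIm (q : ℍ[ℝ]) : ℍ[ℝ] := ‖q.im‖⁻¹ • q.im

/- `Arg(q) = ℐ(q)·arg_ℐ(q)` for nonreal `q`, and `0` on the reals. -/
open scoped Classical in
noncomputable def qArg (q : ℍ[ℝ]) : ℍ[ℝ] :=
  if q.im = 0 then 0 else sliceArg q • unitIm q

/-- The `2k`-th branch of the quaternionic argument:
`Arg_{2k}(q) = ℐ(q)·(arg_ℐ(q) + 2kπ)`. -/
noncomputable def qArg2k (k : ℤ) (q : ℍ[ℝ]) : ℍ[ℝ] :=
  (sliceArg q + 2 * (k : ℝ) * Real.pi) • unitIm q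

/-- The sphere `𝕊` of imaginary units of the quaternions. -/
abbrev SphQ : Type := {I : ℍ[ℝ] // I * I = -1}

/-- The identification of antipodal imaginary units. -/
instance sphSetoid : Setoid SphQ where
  r I J := (I : ℍ[ℝ]) = (J : ℍ[ℝ]) ∨ (I : ℍ[ℝ]) = -(J : ℍ[ℝ])
  iseqv := by
    refine ⟨fun I => Or.inl rfl, ?_, ?_⟩
    · rintro I J (h | h)
      · exact Or.inl h.symm
      · exact Or.inr (by rw [h, neg_neg])
    · rintro I J K (h | h) (h' | h')
      · exact Or.inl (h.trans h')
      · exact Or.inr (by rw [h, h'])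
      · exact Or.inr (by rw [h, h'])
      · exact Or.inl (by rw [h, h', neg_neg])

/-- The quotient `𝕊/{±1}` of the sphere of imaginary units by the antipodal map. -/
abbrev PS : Type := Quotient sphSetoid

/-- `q` belongs to the complex slice `ℂ_c = ℝ + ℝJ` determined by `c ∈ 𝕊/{±1}`. -/
def inSlice (q : ℍ[ℝ]) (c : PS) : Prop :=
  ∃ J : SphQ, Quotient.mk sphSetoid J = c ∧ ∃ x y : ℝ, q = (x : ℍ[ℝ]) + y • (J : ℍ[ℝ])

/-- `𝔍` is a companion of the path `γ` on `[a,b]`. -/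
def IsCompanion (γ : ℝ → ℍ[ℝ]) (a b : ℝ) (𝔍 : ℝ → PS) : Prop :=
  ContinuousOn 𝔍 (Set.Icc a b) ∧ ∀ t ∈ Set.Icc a b, inSlice (γ t) (𝔍 t)

theorem twisted_iff_shadow_conjugate_endpoints (a b : ℝ) (hab : a ≤ b)
    (γ : ℝ → ℍ[ℝ]) (ℐ : ℝ → SphQ) (x y : ℝ → ℝ)
    (hγ : ContinuousOn γ (Icc a b)) (hne : ∀ t ∈ Icc a b, γ t ≠ 0)
    (hℐ : ContinuousOn ℐ (Icc a b))
    (hx : ContinuousOn x (Icc a b)) (hy : ContinuousOn y (Icc a b))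
    (hcan : ∀ t ∈ Icc a b, γ t = (x t : ℍ[ℝ]) + y t • (ℐ t : ℍ[ℝ]))
    (hloop : γ a = γ b)
    (hcomp : (ℐ a : ℍ[ℝ]) = (ℐ b : ℍ[ℝ]) ∨ (ℐ a : ℍ[ℝ]) = -(ℐ b : ℍ[ℝ]))
    (hnonreal : (γ a).im ≠ 0) :
    (ℐ a : ℍ[ℝ]) = -(ℐ b : ℍ[ℝ]) ↔
      (x a : ℂ) + (y a : ℂ) * Complex.I =
        (starRingEnd ℂ) ((x b : ℂ) + (y b : ℂ) * Complex.I) := by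
  -- basic facts
  have hIre : ∀ I : SphQ, (I : ℍ[ℝ]).re = 0 := by
    rintro ⟨I, hI⟩
    have h1 := congrArg QuaternionAlgebra.re hI
    have h2 := congrArg QuaternionAlgebra.imI hI
    have h3 := congrArg QuaternionAlgebra.imJ hI
    have h4 := congrArg QuaternionAlgebra.imK hI
    simp [Quaternion.re_mul, Quaternion.imI_mul, Quaternion.imJ_mul,
      Quaternion.imK_mul] at h1 h2 h3 h4
    nlinarith [sq_nonneg I.re, sq_nonneg I.imI, sq_nonneg I.imJ, sq_nonneg I.imK,
      sq_nonneg (I.re * I.imI), sq_nonneg (I.re * I.imJ), sq_nonneg (I.re * I.imK)]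
  have hI0 : ∀ I : SphQ, (I : ℍ[ℝ]) ≠ 0 := by
    rintro ⟨I, hI⟩ h
    simp only at h
    subst h
    have := congrArg QuaternionAlgebra.re hI
    simp at this
  have ha : a ∈ Icc a b := ⟨le_refl a, hab⟩
  have hb : b ∈ Icc a b := ⟨hab, le_refl b⟩
  have heq : (x a : ℍ[ℝ]) + y a • (ℐ a : ℍ[ℝ]) = (x b : ℍ[ℝ]) + y b • (ℐ b : ℍ[ℝ]) := by
    rw [← hcan a ha, ← hcan b hb, hloop]
  have hxab : x a = x b := by
    have := congrArg QuaternionAlgebra.re heq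
    simpa [hIre (ℐ a), hIre (ℐ b)] using this
  have hsm : y a • (ℐ a : ℍ[ℝ]) = y b • (ℐ b : ℍ[ℝ]) := by
    have h := heq
    rw [hxab] at h
    exact add_left_cancel h
  have hya : y a ≠ 0 := by
    intro h0
    apply hnonreal
    rw [hcan a ha, h0, zero_smul, add_zero]
    ext <;> simp
  have hyb : y b ≠ 0 := by
    intro h0
    rw [h0, zero_smul, smul_eq_zero] at hsm
    rcases hsm with h | h
    · exact hya h
    · exact hI0 (ℐ a) h
  constructor
  · intro h
    have hy' : y a = -y b := by
      rw [h, smul_neg, ← neg_smul] at hsm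
      have := smul_left_injective ℝ (hI0 (ℐ b)) hsm
      linarith [this]
    apply Complex.ext <;> simp [hxab, hy']
  · intro h
    have hy' : y a = -y b := by
      have := congrArg Complex.im h
      simpa using this
    have h2 : y a • (ℐ a : ℍ[ℝ]) = y a • (-(ℐ b : ℍ[ℝ])) := by
      rw [hsm, smul_neg, hy', neg_smul, neg_neg]
    exact smul_right_injective ℍ[ℝ] hya h2
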